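/- Let f : ℝⁿ → ℝ be C¹-smooth and let (x^k) ⊂ ℝⁿ be a sequence satisfying: (H1) there exists σ > 0 such that f(x^k) − f(x^{k+1}) ≥ σ‖∇f(x^k)‖·‖x^{k+1} − x^k‖ for all sufficiently large k, and (H2) for all sufficiently large k, f(x^{k+1}) = f(x^k) implies x^{k+1} = x^k. If x̄ is an accumulation point of (x^k) and f satisfies the PLK condition at x̄, then x^k → x̄ as k → ∞. -/

import Mathlib

open Set Filter

/-- The Polyak–Łojasiewicz–Kurdyka (PLK) condition for `f` at `x₀`. -/
def PLKCondition {n : ℕ} (f : EuclideanSpace ℝ (Fin n) → ℝ)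
    (x₀ : EuclideanSpace ℝ (Fin n)) : Prop :=
  ∃ (η : ℝ) (U : Set (EuclideanSpace ℝ (Fin n))) (φ : ℝ → ℝ),
    0 < η ∧ U ∈ nhds x₀ ∧ φ 0 = 0 ∧
    (∀ t ∈ Set.Ico (0:ℝ) η, 0 ≤ φ t) ∧
    ConcaveOn ℝ (Set.Ico 0 η) φ ∧
    (∀ t ∈ Set.Ioo (0:ℝ) η, HasDerivAt φ (deriv φ t) t) ∧
    ContinuousOn (deriv φ) (Set.Ioo 0 η) ∧
    (∀ t ∈ Set.Ioo (0:ℝ) η, 0 < deriv φ t) ∧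
    ∀ x ∈ U, f x₀ < f x → f x < f x₀ + η →
      1 ≤ deriv φ (f x - f x₀) * ‖gradient f x‖

/-- Abadie–Mahony–Andrews-type convergence: if a sequence of iterates for a `C¹` function `f`
satisfies the primary descent condition (H1) and the complementary descent condition (H2),
`xb` is an accumulation point of the sequence, and `f` satisfies the PLK condition at `xb`,
then the whole sequence converges to `xb`. -/
theorem convergence_of_descent_conditions_PLK {n : ℕ}
    (f : EuclideanSpace ℝ (Fin n) → ℝ) (hf : ContDiff ℝ 1 f)
    (x : ℕ → EuclideanSpace ℝ (Fin n))
    (H1 : ∃ σ > (0:ℝ), ∃ N : ℕ, ∀ k ≥ N,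
      σ * (‖gradient f (x k)‖ * ‖x (k+1) - x k‖) ≤ f (x k) - f (x (k+1)))
    (H2 : ∃ N : ℕ, ∀ k ≥ N, f (x (k+1)) = f (x k) → x (k+1) = x k)
    (xb : EuclideanSpace ℝ (Fin n))
    (hacc : MapClusterPt xb atTop x)
    (hPLK : PLKCondition f xb) :
    Tendsto x atTop (nhds xb) := by
  obtain ⟨σ, hσ, N1, h1⟩ := H1
  obtain ⟨N2, h2⟩ := H2
  obtain ⟨η, U, φ, hη, hU, hφ0, hφnn, hconc, hderiv, -, hderivpos, hKL⟩ := hPLK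
  have hfc : Continuous f := hf.continuous
  set fb := f xb with hfb
  have hfreq : ∀ s ∈ nhds xb, ∃ᶠ k in atTop, x k ∈ s := mapClusterPt_iff_frequently.mp hacc
  -- monotonicity of f ∘ x beyond N1
  have hstepmono : ∀ k, N1 ≤ k → f (x (k+1)) ≤ f (x k) := by
    intro k hk
    have h := h1 k hk
    nlinarith [mul_nonneg (norm_nonneg (gradient f (x k))) (norm_nonneg (x (k+1) - x k))]
  have mono : ∀ j k, N1 ≤ j → j ≤ k → f (x k) ≤ f (x j) := by
    intro j k hj hjk
    induction k with
    | zero => interval_cases j; rfl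
    | succ k ih =>
      rcases Nat.lt_or_ge j (k+1) with h | h
      · have hk' : j ≤ k := Nat.lt_succ_iff.mp h
        exact le_trans (hstepmono k (le_trans hj hk')) (ih hk')
      · have hje : j = k+1 := le_antisymm hjk h
        rw [hje]
  -- lower bound
  have hlow : ∀ k, N1 ≤ k → fb ≤ f (x k) := by
    intro k hk
    by_contra h
    push_neg at h
    have hV : f ⁻¹' Ioi (f (x k)) ∈ nhds xb :=
      hfc.continuousAt.preimage_mem_nhds (Ioi_mem_nhds h)
    obtain ⟨j, hj, hjk⟩ := ((hfreq _ hV).and_eventually (eventually_ge_atTop k)).exists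
    exact absurd (mono k j hk hjk) (not_le.mpr hj)
  -- tendsto
  have htend : Tendsto (fun k => f (x k)) atTop (nhds fb) := by
    refine tendsto_order.2 ⟨fun b hb => ?_, fun b hb => ?_⟩
    · filter_upwards [eventually_ge_atTop N1] with k hk
      exact lt_of_lt_of_le hb (hlow k hk)
    · have hV : f ⁻¹' Iio b ∈ nhds xb := hfc.continuousAt.preimage_mem_nhds (Iio_mem_nhds hb)
      obtain ⟨K, hK, hKN⟩ := ((hfreq _ hV).and_eventually (eventually_ge_atTop N1)).exists
      filter_upwards [eventually_ge_atTop K] with k hk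
      exact lt_of_le_of_lt (mono K k hKN hk) hK
  by_cases hcase : ∃ K, N1 ≤ K ∧ N2 ≤ K ∧ f (x K) = fb
  · -- eventually constant case
    obtain ⟨K, hK1, hK2, hKf⟩ := hcase
    have hval : ∀ k, K ≤ k → f (x k) = fb := fun k hk =>
      le_antisymm (hKf ▸ mono K k hK1 hk) (hlow k (le_trans hK1 hk))
    have hconst : ∀ k, K ≤ k → x k = x K := by
      intro k hk
      induction k with
      | zero =>
        have hz : K = 0 := Nat.le_zero.mp hk
        rw [hz]
      | succ k ih =>
        rcases Nat.lt_or_ge K (k+1) with h | h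
        · have hk' : K ≤ k := Nat.lt_succ_iff.mp h
          have hh := h2 k (le_trans hK2 hk')
            (by rw [hval (k+1) hk, hval k hk'])
          rw [hh, ih hk']
        · have hKe : K = k+1 := le_antisymm hk h
          rw [hKe]
    have hxK : x K = xb := by
      by_contra hne
      have hd : (0:ℝ) < dist (x K) xb := dist_pos.mpr hne
      obtain ⟨j, hj, hjK⟩ := ((hfreq _ (Metric.ball_mem_nhds xb hd)).and_eventually
        (eventually_ge_atTop K)).exists
      rw [hconst j hjK] at hj
      exact absurd (Metric.mem_ball.mp hj) (lt_irrefl _)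
    refine tendsto_const_nhds.congr' ?_
    filter_upwards [eventually_ge_atTop K] with k hk
    rw [hconst k hk, hxK]
  · push_neg at hcase
    have hpos : ∀ k, N1 ≤ k → N2 ≤ k → fb < f (x k) := fun k hk1 hk2 =>
      lt_of_le_of_ne (hlow k hk1) (Ne.symm (hcase k hk1 hk2))
    set r : ℕ → ℝ := fun k => f (x k) - fb with hr
    have hrtend : Tendsto r atTop (nhds 0) := by
      simpa using htend.sub_const fb
    -- φ is monotone on Ioo 0 η
    have hφcont : ContinuousOn φ (Ioo 0 η) :=
      fun t ht => (hderiv t ht).continuousAt.continuousWithinAt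
    have hφmono : StrictMonoOn φ (Ioo 0 η) := by
      apply strictMonoOn_of_deriv_pos (convex_Ioo 0 η) hφcont
      intro t ht
      rw [interior_Ioo] at ht
      exact hderivpos t ht
    -- infimum c
    have hne : (Ioo (0:ℝ) η).Nonempty := nonempty_Ioo.mpr hη
    set c := sInf (φ '' Ioo 0 η) with hc
    have hbdd : BddBelow (φ '' Ioo 0 η) := by
      refine ⟨0, fun y hy => ?_⟩
      obtain ⟨t, ht, rfl⟩ := hy
      exact hφnn t (Ioo_subset_Ico_self ht)
    have hcle : ∀ t ∈ Ioo (0:ℝ) η, c ≤ φ t := fun t ht => csInf_le hbdd ⟨t, ht, rfl⟩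
    -- radius
    obtain ⟨ρ, hρpos, hρU⟩ := Metric.mem_nhds_iff.mp hU
    have hε : (0:ℝ) < σ * ρ / 2 := by positivity
    obtain ⟨y, hymem, hy⟩ := exists_lt_of_csInf_lt (hne.image φ)
      (lt_add_of_pos_right c hε)
    obtain ⟨t₀, ht₀, rfl⟩ := hymem
    -- choose k₀
    have hev : ∀ᶠ k in atTop, (N1 ≤ k ∧ N2 ≤ k) ∧ r k < t₀ := by
      filter_upwards [eventually_ge_atTop N1, eventually_ge_atTop N2,
        hrtend.eventually (eventually_lt_nhds ht₀.1)] with k ha hb hcc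
      exact ⟨⟨ha, hb⟩, hcc⟩
    have hfreq2 : ∃ᶠ k in atTop, x k ∈ Metric.ball xb (ρ/2) :=
      hfreq _ (Metric.ball_mem_nhds xb (by positivity))
    obtain ⟨k₀, hk₀b, ⟨hk₀1, hk₀2⟩, hk₀t⟩ := (hfreq2.and_eventually hev).exists
    have hk₀d : dist (x k₀) xb < ρ/2 := Metric.mem_ball.mp hk₀b
    -- r k ∈ Ioo 0 η for k ≥ k₀
    have hrmem : ∀ k, k₀ ≤ k → r k ∈ Ioo 0 η := by
      intro k hk
      constructor
      · exact sub_pos.mpr (hpos k (le_trans hk₀1 hk) (le_trans hk₀2 hk))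
      · have h := mono k₀ k hk₀1 hk
        have : r k ≤ r k₀ := sub_le_sub_right h fb
        exact lt_of_le_of_lt this (lt_trans hk₀t ht₀.2)
    have hrle : ∀ k, k₀ ≤ k → r k ≤ r k₀ := fun k hk =>
      sub_le_sub_right (mono k₀ k hk₀1 hk) fb
    have hφk₀ : φ (r k₀) < c + σ * ρ / 2 :=
      lt_of_le_of_lt (hφmono.monotoneOn (hrmem k₀ le_rfl) ht₀ hk₀t.le) hy
    -- per-step bound
    have hstep : ∀ k, k₀ ≤ k → x k ∈ U →
        σ * ‖x (k+1) - x k‖ ≤ φ (r k) - φ (r (k+1)) := by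
      intro k hk hkU
      have hrk := hrmem k hk
      have hrk1 := hrmem (k+1) (le_trans hk (Nat.le_succ k))
      have hrle' : r (k+1) ≤ r k := sub_le_sub_right (hstepmono k (le_trans hk₀1 hk)) fb
      rcases eq_or_lt_of_le hrle' with heq | hlt
      · have hfe : f (x (k+1)) = f (x k) := by
          have := heq
          simp only [hr, sub_left_inj] at this
          exact this
        have hx := h2 k (le_trans hk₀2 hk) hfe
        rw [hx, sub_self, norm_zero, mul_zero, heq, sub_self]
      · have hfxk : f (x k) < fb + η := by
          have hh := hrk.2
          simp only [hr] at hh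
          linarith
        have hKLk := hKL (x k) hkU (hpos k (le_trans hk₀1 hk) (le_trans hk₀2 hk)) hfxk
        have hKLk' : 1 ≤ deriv φ (r k) * ‖gradient f (x k)‖ := hKLk
        have hd := hderivpos (r k) hrk
        have hslope : deriv φ (r k) * (r k - r (k+1)) ≤ φ (r k) - φ (r (k+1)) := by
          have hneg : ConvexOn ℝ (Ico 0 η) (-φ) := hconc.neg
          have hda : HasDerivAt (-φ) (-(deriv φ (r k))) (r k) := (hderiv _ hrk).neg
          have hs := hneg.slope_le_of_hasDerivAt (Ioo_subset_Ico_self hrk1)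
            (Ioo_subset_Ico_self hrk) hlt hda
          rw [slope_def_field] at hs
          have hpos' : (0:ℝ) < r k - r (k+1) := sub_pos.mpr hlt
          rw [div_le_iff₀ hpos'] at hs
          simp only [Pi.neg_apply] at hs
          nlinarith
        have hgn : (0:ℝ) ≤ σ * ‖x (k+1) - x k‖ :=
          mul_nonneg hσ.le (norm_nonneg _)
        calc σ * ‖x (k+1) - x k‖
            ≤ (deriv φ (r k) * ‖gradient f (x k)‖) * (σ * ‖x (k+1) - x k‖) :=
              le_mul_of_one_le_left hgn hKLk'
          _ = deriv φ (r k) * (σ * (‖gradient f (x k)‖ * ‖x (k+1) - x k‖)) := by ring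
          _ ≤ deriv φ (r k) * (f (x k) - f (x (k+1))) :=
              mul_le_mul_of_nonneg_left (h1 k (le_trans hk₀1 hk)) hd.le
          _ = deriv φ (r k) * (r k - r (k+1)) := by simp only [hr]; ring
          _ ≤ _ := hslope
    set a : ℕ → ℝ := fun j => ‖x (j+1) - x j‖ with ha
    -- main induction
    have hind : ∀ m, σ * (∑ j ∈ Finset.range m, a (k₀ + j)) ≤ φ (r k₀) - φ (r (k₀ + m)) := by
      intro m
      induction m with
      | zero => simp
      | succ m ih =>
        have hk : k₀ ≤ k₀ + m := Nat.le_add_right k₀ m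
        have hsum_lt : ∑ j ∈ Finset.range m, a (k₀ + j) < ρ/2 := by
          have h1' := hcle (r (k₀+m)) (hrmem _ hk)
          have : σ * (∑ j ∈ Finset.range m, a (k₀ + j)) < σ * (ρ/2) := by
            calc σ * (∑ j ∈ Finset.range m, a (k₀ + j)) ≤ φ (r k₀) - φ (r (k₀+m)) := ih
              _ ≤ φ (r k₀) - c := by linarith
              _ < σ * ρ / 2 := by linarith
              _ = σ * (ρ/2) := by ring
          exact lt_of_mul_lt_mul_left this hσ.le
        have hdist : dist (x (k₀+m)) (x k₀) ≤ ∑ j ∈ Finset.range m, a (k₀ + j) := by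
          have h := dist_le_range_sum_dist (fun i => x (k₀ + i)) m
          rw [dist_comm]
          simp only [Nat.add_zero] at h
          refine le_trans h (le_of_eq (Finset.sum_congr rfl fun i _ => ?_))
          rw [ha, dist_eq_norm, ← norm_neg]
          congr 1
          have : k₀ + (i+1) = k₀ + i + 1 := by omega
          rw [this]
          abel
        have hxU : x (k₀+m) ∈ U := by
          apply hρU
          rw [Metric.mem_ball]
          calc dist (x (k₀+m)) xb ≤ dist (x (k₀+m)) (x k₀) + dist (x k₀) xb := dist_triangle _ _ _
            _ < ρ/2 + ρ/2 := by
                apply add_lt_add_of_le_of_lt (le_trans hdist hsum_lt.le) hk₀d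
            _ = ρ := by ring
        have hst := hstep (k₀+m) hk hxU
        rw [Finset.sum_range_succ, mul_add]
        have heq : k₀ + (m+1) = (k₀ + m) + 1 := by omega
        rw [heq]
        linarith
    -- summability
    have hsummable : Summable (fun j => a (k₀ + j)) := by
      apply summable_of_sum_range_le (c := (φ (r k₀) - c)/σ) (fun j => norm_nonneg _)
      intro m
      have h1' := hcle (r (k₀+m)) (hrmem _ (Nat.le_add_right k₀ m))
      rw [le_div_iff₀ hσ]
      have := hind m
      linarith [hind m]
    have hsummable' : Summable a := by
      rw [← summable_nat_add_iff (f := a) k₀]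
      refine hsummable.congr fun j => ?_
      simp [Nat.add_comm]
    have hcauchy : CauchySeq x := by
      apply cauchySeq_of_summable_dist
      refine hsummable'.congr fun j => ?_
      show ‖x (j+1) - x j‖ = dist (x j) (x (j+1))
      rw [dist_eq_norm']
    obtain ⟨L, hL⟩ := cauchySeq_tendsto_of_complete hcauchy
    have hxbL : xb = L := by
      have hmap : map x atTop ≤ nhds L := hL
      have hnb : NeBot (nhds xb ⊓ map x atTop) := hacc
      have : NeBot (nhds xb ⊓ nhds L) := hnb.mono (inf_le_inf_left _ hmap)
      exact eq_of_nhds_neBot this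
    rwa [hxbL]
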